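/- Abstract version: let H be a self-adjoint operator with 0 ≤ H ≤ I on a Hilbert space, 0 < ε < 1, and suppose ψ is a unit eigenvector with Hψ = αψ, α > 1−ε, and h is a unit vector with ⟨Hh,h⟩ = 1−ηε for some η ∈ (1,1/ε) and Re⟨Hψ,h⟩ = α·c for some c ∈ (0,(1−ε)/α). Then for 0 < δ ≤ 2c(α−(1−ε))/(ε(η−1)), the vector f = ψ + δh satisfies ⟨Hf,f⟩ ≥ (1−ε)‖f‖₂² while ⟨H(δh),δh⟩ < (1−ε)‖δh‖₂². -/

import Mathlib

open scoped ComplexInnerProductSpace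

/-- Abstract version: let `T` be self-adjoint with `0 ≤ T ≤ I`, `0 < ε < 1`,
`ψ` a unit eigenvector with `Tψ = αψ`, `α > 1-ε`, and `h` a unit vector with
`⟨Th,h⟩ = 1-ηε`, `η ∈ (1,1/ε)`, `⟨ψ,h⟩ = c ∈ (0,(1-ε)/α)` real (so
`Re⟨Tψ,h⟩ = αc`). Then for `0 < δ ≤ 2c(α-(1-ε))/(ε(η-1))`, `f = ψ + δh`
satisfies `⟨Tf,f⟩ ≥ (1-ε)‖f‖²` while `⟨T(δh),δh⟩ < (1-ε)‖δh‖²`. -/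
theorem stmt15
    {H : Type*} [NormedAddCommGroup H] [InnerProductSpace ℂ H] [CompleteSpace H]
    (T : H →L[ℂ] H) (hsa : IsSelfAdjoint T)
    (hpos : ∀ v : H, 0 ≤ (⟪v, T v⟫).re) (hle : ∀ v : H, (⟪v, T v⟫).re ≤ ‖v‖ ^ 2)
    (ε : ℝ) (hε0 : 0 < ε) (hε1 : ε < 1)
    (ψ h : H) (hψ : ‖ψ‖ = 1) (hh : ‖h‖ = 1)
    (α : ℝ) (heig : T ψ = (α : ℂ) • ψ) (hα : 1 - ε < α)
    (η : ℝ) (hη1 : 1 < η) (hη2 : η < 1 / ε)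
    (hQh : (⟪h, T h⟫).re = 1 - η * ε)
    (c : ℝ) (hc0 : 0 < c) (hc1 : c < (1 - ε) / α)
    (hinner : ⟪h, ψ⟫ = (c : ℂ))
    (hReTψh : (⟪h, T ψ⟫).re = α * c)
    (δ : ℝ) (hδ0 : 0 < δ) (hδ : δ ≤ 2 * c * (α - (1 - ε)) / (ε * (η - 1))) :
    ((1 - ε) * ‖ψ + δ • h‖ ^ 2 ≤ (⟪ψ + δ • h, T (ψ + δ • h)⟫).re) ∧
    (⟪δ • h, T (δ • h)⟫).re < (1 - ε) * ‖δ • h‖ ^ 2 := by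
  have hsym := hsa.isSymmetric
  have hαε : 0 < α - (1 - ε) := by linarith
  have hds : ∀ x : H, δ • x = ((δ : ℂ)) • x := fun x =>
    RCLike.real_smul_eq_coe_smul (K := ℂ) δ x
  simp only [hds]
  have hψh : ⟪ψ, h⟫ = (c : ℂ) := by rw [← inner_conj_symm, hinner]; simp
  have hTψψ : (⟪ψ, T ψ⟫).re = α := by
    rw [heig, inner_smul_right, inner_self_eq_norm_sq_to_K, hψ]
    simp
  have hψTh : (⟪ψ, T h⟫).re = α * c := by
    have h1 : ⟪ψ, T h⟫ = ⟪T ψ, h⟫ := (hsym ψ h).symm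
    have h2 : ⟪T ψ, h⟫ = starRingEnd ℂ ⟪h, T ψ⟫ := (inner_conj_symm _ _).symm
    rw [h1, h2, Complex.conj_re, hReTψh]
  have hnorm : ‖ψ + (δ : ℂ) • h‖ ^ 2 = 1 + 2 * δ * c + δ ^ 2 := by
    rw [norm_add_sq (𝕜 := ℂ), hψ, norm_smul, hh, inner_smul_right, hψh]
    simp only [Complex.mul_re, Complex.ofReal_re, Complex.ofReal_im, Complex.norm_real]
    simp [abs_of_pos hδ0]
    ring
  have hδnorm : ‖(δ : ℂ) • h‖ ^ 2 = δ ^ 2 := by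
    rw [norm_smul, hh]
    simp [abs_of_pos hδ0]
  have hQ : (⟪ψ + (δ : ℂ) • h, T (ψ + (δ : ℂ) • h)⟫).re
      = α + 2 * δ * (α * c) + δ ^ 2 * (1 - η * ε) := by
    rw [map_add, map_smul]
    simp only [inner_add_left, inner_add_right, inner_smul_left, inner_smul_right]
    simp only [Complex.add_re, Complex.mul_re, Complex.conj_re, Complex.conj_im,
      Complex.ofReal_re, Complex.ofReal_im]
    rw [hTψψ, hψTh, hReTψh, hQh]
    ring
  have hQδ : (⟪(δ : ℂ) • h, T ((δ : ℂ) • h)⟫).re = δ ^ 2 * (1 - η * ε) := by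
    rw [map_smul, inner_smul_left, inner_smul_right]
    simp only [Complex.mul_re, Complex.conj_re, Complex.conj_im, Complex.ofReal_re,
      Complex.ofReal_im]
    rw [hQh]; ring
  constructor
  · rw [hnorm, hQ]
    have hden : 0 < ε * (η - 1) := by nlinarith
    have hd : δ * (ε * (η - 1)) ≤ 2 * c * (α - (1 - ε)) := by
      calc δ * (ε * (η - 1)) ≤ 2 * c * (α - (1 - ε)) / (ε * (η - 1)) * (ε * (η - 1)) :=
            mul_le_mul_of_nonneg_right hδ hden.le
        _ = 2 * c * (α - (1 - ε)) := div_mul_cancel₀ _ hden.ne'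
    nlinarith [mul_le_mul_of_nonneg_left hd hδ0.le, mul_pos hc0 hδ0]
  · rw [hQδ, hδnorm]
    have : ε < η * ε := by nlinarith
    nlinarith [pow_pos hδ0 2]
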